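/- Let $F$ be a graph and $u \in V(F)$ a vertex with $d_F(u) = \delta(F)$. If no subgraph $F' \subseteq F$ containing $u$ satisfies $e_{F'}/(v_{F'}-1) = m_1(F)$, then $F$ contains an edge with at most one endpoint in the closed neighborhood $N_F[u]$. -/

import Mathlib

open SimpleGraph

/-- The 1-density `e_H / (v_H - 1)` of a subgraph. -/
noncomputable def subDensity {V : Type*} {F : SimpleGraph V} (H : F.Subgraph) : ℝ :=
  (H.edgeSet.ncard : ℝ) / ((H.verts.ncard : ℝ) - 1)

/-- `m₁(F) = max { e_{F'}/(v_{F'}-1) : F' ⊆ F, v_{F'} ≥ 2 }`. -/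
noncomputable def m1 {V : Type*} (F : SimpleGraph V) : ℝ :=
  sSup {d : ℝ | ∃ H : F.Subgraph, 2 ≤ H.verts.ncard ∧ d = subDensity H}

section aux
variable {V : Type*} {F : SimpleGraph V}

lemma subgraph_finite [Finite V] : Finite F.Subgraph := by
  have : Finite (Set V × (V → V → Prop)) := by infer_instance
  exact Finite.of_injective (fun H => (H.verts, H.Adj)) (by
    intro H1 H2 h
    exact SimpleGraph.Subgraph.ext (congrArg Prod.fst h) (congrArg Prod.snd h))

lemma m1_set_finite [Finite V] :
    {d : ℝ | ∃ H : F.Subgraph, 2 ≤ H.verts.ncard ∧ d = subDensity H}.Finite := by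
  have := @subgraph_finite V F _
  apply Set.Finite.subset (Set.finite_range (subDensity (F := F)))
  rintro d ⟨H, -, rfl⟩
  exact ⟨H, rfl⟩

lemma le_m1 [Finite V] (H : F.Subgraph) (h : 2 ≤ H.verts.ncard) : subDensity H ≤ m1 F :=
  le_csSup m1_set_finite.bddAbove ⟨H, h, rfl⟩

def cone (H : F.Subgraph) (u : V) (hsub : ∀ x ∈ H.verts, F.Adj u x) : F.Subgraph where
  verts := insert u H.verts
  Adj a b := H.Adj a b ∨ (a = u ∧ b ∈ H.verts) ∨ (b = u ∧ a ∈ H.verts)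
  adj_sub := by
    rintro a b (h | ⟨rfl, hb⟩ | ⟨rfl, ha⟩)
    · exact H.adj_sub h
    · exact hsub _ hb
    · exact (hsub _ ha).symm
  edge_vert := by
    rintro a b (h | ⟨rfl, hb⟩ | ⟨rfl, ha⟩)
    · exact Set.mem_insert_of_mem _ (H.edge_vert h)
    · exact Set.mem_insert _ _
    · exact Set.mem_insert_of_mem _ ha
  symm := by
    constructor
    rintro a b (h | ⟨rfl, hb⟩ | ⟨rfl, ha⟩)
    · exact Or.inl h.symm
    · exact Or.inr (Or.inr ⟨rfl, hb⟩)
    · exact Or.inr (Or.inl ⟨rfl, ha⟩)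

lemma cone_edgeSet (H : F.Subgraph) (u : V) (hsub : ∀ x ∈ H.verts, F.Adj u x) :
    (cone H u hsub).edgeSet = H.edgeSet ∪ (fun x => s(u, x)) '' H.verts := by
  ext e
  induction e using Sym2.ind with
  | _ a b =>
    simp only [Subgraph.mem_edgeSet, Set.mem_union, Set.mem_image]
    constructor
    · rintro (h | ⟨rfl, hb⟩ | ⟨rfl, ha⟩)
      · exact Or.inl h
      · exact Or.inr ⟨b, hb, rfl⟩
      · exact Or.inr ⟨a, ha, Sym2.eq_swap⟩
    · rintro (h | ⟨x, hx, hxe⟩)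
      · exact Or.inl h
      · rw [Sym2.eq_iff] at hxe
        rcases hxe with ⟨rfl, rfl⟩ | ⟨rfl, rfl⟩
        · exact Or.inr (Or.inl ⟨rfl, hx⟩)
        · exact Or.inr (Or.inr ⟨rfl, hx⟩)

lemma cone_counts [Finite V] (H : F.Subgraph) (u : V) (hsub : ∀ x ∈ H.verts, F.Adj u x) :
    (cone H u hsub).verts.ncard = H.verts.ncard + 1 ∧
    (cone H u hsub).edgeSet.ncard = H.edgeSet.ncard + H.verts.ncard := by
  have hu : u ∉ H.verts := fun h => (F.irrefl (hsub u h))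
  constructor
  · exact Set.ncard_insert_of_notMem hu H.verts.toFinite
  · rw [cone_edgeSet]
    have hinj : Set.InjOn (fun x => s(u, x)) H.verts := by
      intro x _ y _ h
      exact Sym2.congr_right.mp h
    have hdisj : Disjoint H.edgeSet ((fun x => s(u, x)) '' H.verts) := by
      rw [Set.disjoint_right]
      rintro e ⟨x, hx, rfl⟩ he
      rw [Subgraph.mem_edgeSet] at he
      exact hu (H.edge_vert he)
    rw [Set.ncard_union_eq hdisj H.edgeSet.toFinite (H.verts.toFinite.image _),
      Set.ncard_image_of_injOn hinj]

lemma edge_bound [Finite V] (H : F.Subgraph) :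
    H.edgeSet.ncard ≤ H.verts.ncard * (H.verts.ncard - 1) := by
  have hsub : H.edgeSet ⊆ Sym2.mk.uncurry '' H.verts.offDiag := by
    intro e he
    induction e using Sym2.ind with
    | _ a b =>
      rw [Subgraph.mem_edgeSet] at he
      exact ⟨(a, b), ⟨H.edge_vert he, H.edge_vert he.symm, (H.adj_sub he).ne⟩, rfl⟩
  calc H.edgeSet.ncard ≤ (Sym2.mk.uncurry '' H.verts.offDiag).ncard :=
        Set.ncard_le_ncard hsub ((H.verts.toFinite.offDiag).image _)
    _ ≤ H.verts.offDiag.ncard := Set.ncard_image_le H.verts.toFinite.offDiag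
    _ = H.verts.ncard * H.verts.ncard - H.verts.ncard := by
        classical
        have h1 : H.verts = ↑H.verts.toFinite.toFinset := by simp
        rw [h1, ← Finset.coe_offDiag, Set.ncard_coe_finset, Set.ncard_coe_finset,
          Finset.offDiag_card]
    _ ≤ H.verts.ncard * (H.verts.ncard - 1) := by
        cases H.verts.ncard <;> simp <;> ring_nf <;> omega

lemma isolated_delete [Finite V] (H : F.Subgraph) (x : V) (hx : x ∈ H.verts)
    (hiso : ∀ y, ¬ H.Adj x y) :
    (H.deleteVerts {x}).edgeSet = H.edgeSet ∧
    (H.deleteVerts {x}).verts.ncard = H.verts.ncard - 1 := by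
  constructor
  · ext e
    induction e using Sym2.ind with
    | _ a b =>
      simp only [Subgraph.mem_edgeSet, Subgraph.deleteVerts_adj, Set.mem_singleton_iff]
      constructor
      · rintro ⟨-, -, -, -, h⟩; exact h
      · intro h
        refine ⟨H.edge_vert h, ?_, H.edge_vert h.symm, ?_, h⟩
        · rintro rfl; exact hiso b h
        · rintro rfl; exact hiso a h.symm
  · rw [Subgraph.deleteVerts_verts]
    exact Set.ncard_diff_singleton_of_mem hx

end aux

/-- if `u` is a vertex of minimum degree of `F` and no subgraph of `F`
containing `u` has 1-density equal to `m₁(F)`, then `F` has an edge with at most one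
endpoint in the closed neighbourhood `N_F[u]`. -/
theorem edge_outside_closed_neighborhood
    {V : Type*} [Fintype V] (F : SimpleGraph V) [DecidableRel F.Adj] (u : V)
    (hu : F.degree u = F.minDegree)
    (hnone : ∀ H : F.Subgraph, u ∈ H.verts → subDensity H ≠ m1 F) :
    ∃ v w : V, F.Adj v w ∧
      (v ∉ insert u (F.neighborSet u) ∨ w ∉ insert u (F.neighborSet u)) := by
  by_contra hc
  push_neg at hc
  -- all edges lie within the closed neighbourhood of u
  have hin : ∀ v w, F.Adj v w → v ∈ insert u (F.neighborSet u) ∧ w ∈ insert u (F.neighborSet u) :=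
    fun v w h => hc v w h
  set S := {d : ℝ | ∃ H : F.Subgraph, 2 ≤ H.verts.ncard ∧ d = subDensity H} with hS
  by_cases hE : ∃ a b, F.Adj a b
  case neg =>
    -- no edges: the singleton subgraph at u has density 0 = m1 F
    push_neg at hE
    have hm : m1 F = 0 := by
      have hsub : S ⊆ {0} := by
        rintro d ⟨H, -, rfl⟩
        have : H.edgeSet = ∅ := by
          ext e
          induction e using Sym2.ind with
          | _ a b =>
            simp only [Subgraph.mem_edgeSet, Set.mem_empty_iff_false, iff_false]
            exact fun h => hE a b (H.adj_sub h)
        simp [subDensity, this]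
      rcases Set.subset_singleton_iff_eq.mp hsub with h | h
      · rw [m1, ← hS, h, Real.sSup_empty]
      · rw [m1, ← hS, h, csSup_singleton]
    exact hnone (F.singletonSubgraph u) rfl (by
      have he : (F.singletonSubgraph u).edgeSet = ∅ := by
        simp [SimpleGraph.edgeSet_singletonSubgraph]
      simp [subDensity, he, hm])
  case pos =>
    obtain ⟨a, b, hab⟩ := hE
    -- m1 F ≥ 1 > 0
    have h1S : (1 : ℝ) ∈ S := by
      refine ⟨F.subgraphOfAdj hab, ?_, ?_⟩
      · rw [subgraphOfAdj_verts, Set.ncard_pair hab.ne]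
      · rw [subDensity, F.edgeSet_subgraphOfAdj hab, subgraphOfAdj_verts,
          Set.ncard_singleton, Set.ncard_pair hab.ne]
        norm_num
    have hm1pos : (0 : ℝ) < m1 F :=
      lt_of_lt_of_le one_pos (le_csSup m1_set_finite.bddAbove h1S)
    have hmem : m1 F ∈ S := Set.Nonempty.csSup_mem ⟨1, h1S⟩ m1_set_finite
    -- pick an attaining subgraph with minimal vertex count
    have hTne : {k : ℕ | ∃ H : F.Subgraph, 2 ≤ H.verts.ncard ∧ subDensity H = m1 F ∧
        H.verts.ncard = k}.Nonempty := by
      obtain ⟨H, h2, hd⟩ := hmem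
      exact ⟨H.verts.ncard, H, h2, hd.symm, rfl⟩
    obtain ⟨H, h2, hdH, hnH⟩ := Nat.sInf_mem hTne
    have hdH' : (H.edgeSet.ncard : ℝ) / ((H.verts.ncard : ℝ) - 1) = m1 F := hdH
    -- no isolated vertices in H
    have hiso : ∀ x ∈ H.verts, ∃ y, H.Adj x y := by
      intro x hx
      by_contra hno
      push_neg at hno
      have hfe : 0 < H.edgeSet.ncard := by
        rcases Nat.eq_zero_or_pos H.edgeSet.ncard with h0 | h
        · exfalso
          rw [h0] at hdH'
          simp only [Nat.cast_zero, zero_div] at hdH'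
          exact absurd hdH'.symm (ne_of_gt hm1pos)
        · exact h
      by_cases hv3 : 3 ≤ H.verts.ncard
      · -- delete the isolated vertex: strictly smaller witness with density ≥ m1
        obtain ⟨hE', hV'⟩ := isolated_delete H x hx hno
        have h2' : 2 ≤ (H.deleteVerts {x}).verts.ncard := by omega
        have hle : subDensity (H.deleteVerts {x}) ≤ m1 F := le_m1 _ h2'
        have hge : m1 F ≤ subDensity (H.deleteVerts {x}) := by
          rw [← hdH']
          show _ ≤ (((H.deleteVerts {x}).edgeSet.ncard : ℝ)) / _
          rw [hE', hV']
          have hc : ((H.verts.ncard - 1 : ℕ) : ℝ) = (H.verts.ncard : ℝ) - 1 := by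
            have : 1 ≤ H.verts.ncard := by omega
            push_cast [this]
            ring
          rw [hc]
          have h1 : (0:ℝ) < (H.verts.ncard : ℝ) - 1 - 1 := by
            have : (3:ℝ) ≤ (H.verts.ncard : ℝ) := by exact_mod_cast hv3
            linarith
          exact div_le_div_of_nonneg_left (by positivity) h1 (by linarith)
        have heq : subDensity (H.deleteVerts {x}) = m1 F := le_antisymm hle hge
        have hmemT : H.verts.ncard - 1 ∈ {k : ℕ | ∃ H : F.Subgraph, 2 ≤ H.verts.ncard ∧
            subDensity H = m1 F ∧ H.verts.ncard = k} :=
          ⟨H.deleteVerts {x}, h2', heq, hV'⟩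
        have := Nat.sInf_le hmemT
        omega
      · -- exactly two vertices: impossible since x is isolated but an edge exists
        obtain ⟨ed, hed⟩ := Set.nonempty_of_ncard_ne_zero hfe.ne'
        induction ed using Sym2.ind with
        | _ c d =>
          rw [SimpleGraph.Subgraph.mem_edgeSet] at hed
          have hxc : x ≠ c := by rintro rfl; exact hno d hed
          have hxd : x ≠ d := by rintro rfl; exact hno c hed.symm
          have hcd : c ≠ d := (H.adj_sub hed).ne
          have hsub3 : ({x, c, d} : Set V) ⊆ H.verts := by
            rintro y (rfl | rfl | rfl)
            · exact hx
            · exact H.edge_vert hed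
            · exact H.edge_vert hed.symm
          have h3 : ({x, c, d} : Set V).ncard = 3 := by
            rw [Set.ncard_insert_of_notMem (by simp [hxc, hxd]) (Set.toFinite _),
              Set.ncard_pair hcd]
          have := Set.ncard_le_ncard hsub3 H.verts.toFinite
          omega
    -- every vertex of H is in the closed neighbourhood of u
    have hvertsN : ∀ x ∈ H.verts, x ∈ insert u (F.neighborSet u) := by
      intro x hx
      obtain ⟨y, hy⟩ := hiso x hx
      exact (hin x y (H.adj_sub hy)).1
    by_cases huH : u ∈ H.verts
    · exact hnone H huH hdH
    · -- all vertices of H are neighbours of u: form the cone over H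
      have hsubN : ∀ x ∈ H.verts, F.Adj u x := by
        intro x hx
        rcases hvertsN x hx with rfl | hx'
        · exact absurd hx huH
        · exact hx'
      obtain ⟨hcv, hce⟩ := cone_counts H u hsubN
      have h2' : 2 ≤ (cone H u hsubN).verts.ncard := by omega
      have hle : subDensity (cone H u hsubN) ≤ m1 F := le_m1 _ h2'
      have hge : m1 F ≤ subDensity (cone H u hsubN) := by
        rw [← hdH']
        show _ ≤ ((cone H u hsubN).edgeSet.ncard : ℝ) / _
        rw [hce, hcv]
        have hb := edge_bound H
        have hbR : (H.edgeSet.ncard : ℝ) ≤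
            (H.verts.ncard : ℝ) * ((H.verts.ncard : ℝ) - 1) := by
          calc (H.edgeSet.ncard : ℝ) ≤ ((H.verts.ncard * (H.verts.ncard - 1) : ℕ) : ℝ) := by
                exact_mod_cast hb
            _ = (H.verts.ncard : ℝ) * ((H.verts.ncard : ℝ) - 1) := by
                have : 1 ≤ H.verts.ncard := by omega
                push_cast [this]
                ring
        have hv2 : (2:ℝ) ≤ (H.verts.ncard : ℝ) := by exact_mod_cast h2
        rw [div_le_div_iff₀ (by linarith) (by push_cast; linarith)]
        push_cast
        nlinarith [Nat.cast_nonneg (α := ℝ) H.edgeSet.ncard]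
      exact hnone (cone H u hsubN) (Set.mem_insert u H.verts) (le_antisymm hle hge)
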